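/- Let Ω ⊂ ℝ^d be a bounded Lipschitz domain and α > 0. The unique minimizer of J(y,u) = ‖y+1‖²_{L²(Ω)} + α‖u‖²_{L²(Ω)} over pairs (y,u) ∈ H¹(Ω) × L²(Ω) with u ≥ 0 a.e. and ∫_Ω (∇y·∇v + y v) = ∫_Ω u v for all v ∈ H¹(Ω), is (y,u) = (0,0), with optimal value |Ω|. -/

import Mathlib

open MeasureTheory

/-- An `H¹(Ω)`-function: differentiable with both the function and its gradient in `L²(Ω)`. -/
def MemH1 {d : ℕ} (Ω : Set (EuclideanSpace ℝ (Fin d)))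
    (y : EuclideanSpace ℝ (Fin d) → ℝ) : Prop :=
  Differentiable ℝ y ∧ MemLp y 2 (volume.restrict Ω) ∧
    MemLp (fun x => ‖gradient y x‖) 2 (volume.restrict Ω)

/-- A feasible pair `(y,u)` for the model problem: `u ∈ L²(Ω)` with `u ≥ 0` a.e.,
`y ∈ H¹(Ω)`, and the weak Neumann state equation `-Δy + y = u` holds. -/
def Feasible {d : ℕ} (Ω : Set (EuclideanSpace ℝ (Fin d)))
    (y u : EuclideanSpace ℝ (Fin d) → ℝ) : Prop :=
  MemH1 Ω y ∧ MemLp u 2 (volume.restrict Ω) ∧ (∀ᵐ x ∂(volume.restrict Ω), 0 ≤ u x) ∧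
    ∀ v : EuclideanSpace ℝ (Fin d) → ℝ, MemH1 Ω v →
      ∫ x in Ω, ((inner ℝ (gradient y x) (gradient v x) : ℝ) + y x * v x) =
        ∫ x in Ω, u x * v x

lemma memH1_const {d : ℕ} (Ω : Set (EuclideanSpace ℝ (Fin d)))
    (hΩ : volume Ω ≠ ⊤) (c : ℝ) : MemH1 Ω (fun _ => c) := by
  have : IsFiniteMeasure (volume.restrict Ω) :=
    ⟨by simpa [Measure.restrict_apply_univ] using hΩ.lt_top⟩
  refine ⟨differentiable_const c, memLp_const c, ?_⟩
  simp only [gradient_fun_const]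
  simpa using memLp_const (μ := volume.restrict Ω) (‖(0 : EuclideanSpace ℝ (Fin d))‖)

/-- The unique minimizer of `J(y,u) = ‖y+1‖² + α‖u‖²` over feasible pairs is `(0,0)`,
with optimal value `|Ω|`. -/
theorem stmt6 {d : ℕ} (Ω : Set (EuclideanSpace ℝ (Fin d)))
    (hΩo : IsOpen Ω) (hΩb : Bornology.IsBounded Ω) (hΩne : Ω.Nonempty)
    (α : ℝ) (hα : 0 < α)
    (J : (EuclideanSpace ℝ (Fin d) → ℝ) → (EuclideanSpace ℝ (Fin d) → ℝ) → ℝ)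
    (hJ : ∀ y u, J y u = (∫ x in Ω, (y x + 1) ^ 2) + α * ∫ x in Ω, (u x) ^ 2) :
    Feasible Ω (fun _ => 0) (fun _ => 0) ∧
    J (fun _ => 0) (fun _ => 0) = (volume Ω).toReal ∧
    (∀ y u, Feasible Ω y u → (volume Ω).toReal ≤ J y u) ∧
    (∀ y u, Feasible Ω y u → J y u = (volume Ω).toReal →
      (∀ᵐ x ∂(volume.restrict Ω), y x = 0) ∧ (∀ᵐ x ∂(volume.restrict Ω), u x = 0)) := by
  have hvol : volume Ω ≠ ⊤ := hΩb.measure_lt_top.ne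
  have hfin : IsFiniteMeasure (volume.restrict Ω) :=
    ⟨by simpa [Measure.restrict_apply_univ] using hvol.lt_top⟩
  -- key decomposition lemma
  have key : ∀ y u : EuclideanSpace ℝ (Fin d) → ℝ, Feasible Ω y u →
      J y u = (∫ x in Ω, (y x) ^ 2) + 2 * (∫ x in Ω, y x) + (volume Ω).toReal
        + α * ∫ x in Ω, (u x) ^ 2 ∧ 0 ≤ ∫ x in Ω, y x := by
    intro y u ⟨hy, hu, hupos, hweak⟩
    have hy2 : Integrable (fun x => (y x) ^ 2) (volume.restrict Ω) := hy.2.1.integrable_sq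
    have hy1 : Integrable y (volume.restrict Ω) :=
      (hy.2.1.mono_exponent (one_le_two : (1:ENNReal) ≤ 2)).integrable le_rfl
    have hconst : Integrable (fun _ : EuclideanSpace ℝ (Fin d) => (1:ℝ)) (volume.restrict Ω) :=
      integrable_const 1
    have hexp : (∫ x in Ω, (y x + 1) ^ 2)
        = (∫ x in Ω, (y x) ^ 2) + 2 * (∫ x in Ω, y x) + (volume Ω).toReal := by
      have h1 : ∀ x, (y x + 1) ^ 2 = (y x) ^ 2 + 2 * y x + 1 := by intro x; ring
      rw [show (fun x => (y x + 1) ^ 2) = fun x => (y x) ^ 2 + 2 * y x + 1 from funext h1]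
      have i1 : Integrable (fun x => (y x) ^ 2 + 2 * y x) (volume.restrict Ω) :=
        hy2.add (hy1.const_mul 2)
      have A := integral_add (μ := volume.restrict Ω)
        (f := fun x => (y x) ^ 2 + 2 * y x) (g := fun _ => (1:ℝ)) i1 hconst
      have B := integral_add (μ := volume.restrict Ω)
        (f := fun x => (y x) ^ 2) (g := fun x => 2 * y x) hy2 (hy1.const_mul 2)
      rw [A, B, MeasureTheory.integral_const_mul]
      simp [Measure.restrict_apply_univ]; rfl
    have hEq : (∫ x in Ω, y x) = ∫ x in Ω, u x := by
      have h := hweak (fun _ => 1) (memH1_const Ω hvol 1)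
      simpa [gradient_const] using h
    have hupos' : 0 ≤ ∫ x in Ω, u x := integral_nonneg_of_ae hupos
    refine ⟨by rw [hJ y u, hexp], by rw [hEq]; exact hupos'⟩
  refine ⟨?_, ?_, ?_, ?_⟩
  · refine ⟨memH1_const Ω hvol 0, by simpa using memLp_const (μ := volume.restrict Ω) (0:ℝ),
      Filter.Eventually.of_forall fun _ => le_rfl, fun v hv => ?_⟩
    simp [gradient_const]
  · rw [hJ]; simp [Measure.restrict_apply_univ]; rfl
  · intro y u hfeas
    obtain ⟨hdec, hypos⟩ := key y u hfeas
    have h2 : 0 ≤ ∫ x in Ω, (y x) ^ 2 := integral_nonneg fun x => sq_nonneg _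
    have h3 : 0 ≤ ∫ x in Ω, (u x) ^ 2 := integral_nonneg fun x => sq_nonneg _
    nlinarith
  · intro y u hfeas heq
    obtain ⟨hdec, hypos⟩ := key y u hfeas
    obtain ⟨hy, hu, hupos, hweak⟩ := hfeas
    have h2 : 0 ≤ ∫ x in Ω, (y x) ^ 2 := integral_nonneg fun x => sq_nonneg _
    have h3 : 0 ≤ ∫ x in Ω, (u x) ^ 2 := integral_nonneg fun x => sq_nonneg _
    have hy20 : (∫ x in Ω, (y x) ^ 2) = 0 := by nlinarith [hJ y u]
    have hu20 : (∫ x in Ω, (u x) ^ 2) = 0 := by nlinarith [hJ y u]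
    constructor
    · have := (integral_eq_zero_iff_of_nonneg (fun x => sq_nonneg (y x))
        hy.2.1.integrable_sq).mp hy20
      filter_upwards [this] with x hx
      exact pow_eq_zero_iff (n := 2) (by norm_num) |>.mp hx
    · have := (integral_eq_zero_iff_of_nonneg (fun x => sq_nonneg (u x))
        hu.integrable_sq).mp hu20
      filter_upwards [this] with x hx
      exact pow_eq_zero_iff (n := 2) (by norm_num) |>.mp hx
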